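/- Dual Agmon estimate for high-energy modes: let K ≥ 3 be even, Hφ = μφ on ℓ²((Z/KZ)^d) with 0 ≤ v_n ≤ V_max, δ > 0 and μ ≥ 4d + δ. Let ũ be the dual landscape (H̃ũ = 1 with H̃ = -Δ + V_max - V) and h̃_n the Agmon distance to J̃_δ(μ̃) = {n : 1/ũ_n ≤ 4d + V_max - μ + δ} for weight (1/ũ_n - μ̃)_+. Then for the same constants C, C_0 as in the low-energy Agmon theorem, for 0 < α < 1/√(Cd): Σ_{h̃_n ≥ 1} e^{2αh̃_n} φ_n² ≤ (C_0/δ) Σ_{n∈M} φ_n². -/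

import Mathlib

attribute [local instance] Classical.propDecidable

open Finset Real

noncomputable section

/-- The `i`-th standard basis vector in the discrete torus `(ZMod K)^d`. -/
def e (d K : ℕ) (i : Fin d) : Fin d → ZMod K :=
  fun j => if j = i then 1 else 0

/-- The periodic discrete Schrödinger operator `H = -Δ + V` on `(ZMod K)^d`. -/
def opH (d K : ℕ) (v φ : (Fin d → ZMod K) → ℝ) (n : Fin d → ZMod K) : ℝ :=
  (∑ i : Fin d, (2 * φ n - φ (n + e d K i) - φ (n - e d K i))) + v n * φ n

/-- `m` and `n` are nearest neighbors on the torus: `|m - n|₁ = 1`. -/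
def adj (d K : ℕ) (m n : Fin d → ZMod K) : Prop :=
  ∃ i : Fin d, m = n + e d K i ∨ m = n - e d K i

/-- The Agmon (semi-)metric associated to a weight `w`:
`ρ(n,m) = inf over unit-step paths γ from n to m of
  ∑_j ln(1 + √(min{w(γ_j), w(γ_{j+1})}))`. -/
def rho (d K : ℕ) (w : (Fin d → ZMod K) → ℝ) (n m : Fin d → ZMod K) : ℝ :=
  sInf {s : ℝ | ∃ (k : ℕ) (γ : ℕ → Fin d → ZMod K),
    γ 0 = n ∧ γ k = m ∧ (∀ j < k, adj d K (γ (j + 1)) (γ j)) ∧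
    s = ∑ j ∈ Finset.range k,
      Real.log (1 + Real.sqrt (min (w (γ j)) (w (γ (j + 1)))))}

/-- The Agmon distance to a region `J`: `h_n = inf_{m ∈ J} ρ(n, m)`. -/
def agmonDist (d K : ℕ) (w : (Fin d → ZMod K) → ℝ)
    (J : Set (Fin d → ZMod K)) (n : Fin d → ZMod K) : ℝ :=
  sInf {s : ℝ | ∃ m ∈ J, s = rho d K w n m}

variable {d K : ℕ} [NeZero K]

lemma sum_shift (g : (Fin d → ZMod K) → ℝ) (a : Fin d → ZMod K) :
    ∑ n, g (n + a) = ∑ n, g n :=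
  Equiv.sum_comp (Equiv.addRight a) g

lemma sum_mul_opH (v ψ ξ : (Fin d → ZMod K) → ℝ) :
    ∑ n, ψ n * opH d K v ξ n
      = ∑ i : Fin d, ∑ n, (ψ (n + e d K i) - ψ n) * (ξ (n + e d K i) - ξ n)
        + ∑ n, v n * ψ n * ξ n := by
  unfold opH
  have h1 : ∑ n, ψ n * ((∑ i : Fin d, (2 * ξ n - ξ (n + e d K i) - ξ (n - e d K i))) + v n * ξ n)
      = (∑ n, ∑ i : Fin d, ψ n * (2 * ξ n - ξ (n + e d K i) - ξ (n - e d K i)))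
        + ∑ n, v n * ψ n * ξ n := by
    rw [← Finset.sum_add_distrib]
    refine Finset.sum_congr rfl fun n _ => ?_
    rw [mul_add, Finset.mul_sum]
    ring
  rw [h1, Finset.sum_comm]
  congr 1
  refine Finset.sum_congr rfl fun i _ => ?_
  have h2 : ∑ n, ψ n * (2 * ξ n - ξ (n + e d K i) - ξ (n - e d K i))
      = (∑ n, ψ n * (ξ n - ξ (n + e d K i))) + ∑ n, ψ n * (ξ n - ξ (n - e d K i)) := by
    rw [← Finset.sum_add_distrib]; refine Finset.sum_congr rfl fun n _ => ?_; ring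
  have h3 : ∑ n, ψ n * (ξ n - ξ (n - e d K i))
      = ∑ n, ψ (n + e d K i) * (ξ (n + e d K i) - ξ n) := by
    rw [← sum_shift (fun m => ψ m * (ξ m - ξ (m - e d K i))) (e d K i)]
    simp [add_sub_cancel_right]
  rw [h2, h3, ← Finset.sum_add_distrib]
  refine Finset.sum_congr rfl fun n _ => ?_; ring

-- pointwise edge identities
lemma edge_id1 (fn fm p q : ℝ) :
    (fm * q - fn * p) * (fm * q - fn * p) - (fm ^ 2 * q - fn ^ 2 * p) * (q - p)
      = p * q * (fm - fn) ^ 2 := by ring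

lemma edge_id2 {a b : ℝ} (ha : a ≠ 0) (hb : b ≠ 0) (p q : ℝ) :
    (q - p) * (q - p) - (q ^ 2 / b - p ^ 2 / a) * (b - a)
      = a * b * (q / b - p / a) ^ 2 := by
  field_simp
  ring

/-- Main energy inequality (★★). -/
lemma energy_ineq (vt u φ f : (Fin d → ZMod K) → ℝ) (μt : ℝ)
    (hu : ∀ n, u n ≠ 0) (hupos : ∀ n, 0 < u n)
    (hland : ∀ n, opH d K vt u n = 1)
    (heig : ∀ n, opH d K vt φ n = μt * φ n) :
    ∑ n, (1 / u n - μt) * (f n * φ n) ^ 2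
      ≤ ∑ i : Fin d, ∑ n, (φ n * φ (n + e d K i)) * (f (n + e d K i) - f n) ^ 2 := by
  set ψ : (Fin d → ZMod K) → ℝ := fun n => f n * φ n with hψ
  have hA := sum_mul_opH vt ψ ψ
  have hB := sum_mul_opH vt (fun n => f n ^ 2 * φ n) φ
  have hC := sum_mul_opH vt (fun n => ψ n ^ 2 / u n) u
  have hBval : ∑ n, (fun n => f n ^ 2 * φ n) n * opH d K vt φ n
      = μt * ∑ n, (f n * φ n) ^ 2 := by
    rw [Finset.mul_sum]
    exact Finset.sum_congr rfl fun n _ => by rw [heig n]; ring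
  have hCval : ∑ n, (fun n => ψ n ^ 2 / u n) n * opH d K vt u n
      = ∑ n, (1 / u n - μt) * (f n * φ n) ^ 2 + μt * ∑ n, (f n * φ n) ^ 2 := by
    rw [Finset.mul_sum, ← Finset.sum_add_distrib]
    refine Finset.sum_congr rfl fun n _ => ?_
    rw [hland n]
    have := hu n
    field_simp [hψ]
    ring
  -- A - B = edge term with (f_m - f_n)^2
  have hAB : ∑ n, ψ n * opH d K vt ψ n
        - ∑ n, (fun n => f n ^ 2 * φ n) n * opH d K vt φ n
      = ∑ i : Fin d, ∑ n, (φ n * φ (n + e d K i)) * (f (n + e d K i) - f n) ^ 2 := by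
    rw [hA, hB]
    have hpot : ∑ n, vt n * ((fun n => f n ^ 2 * φ n) n) * φ n = ∑ n, vt n * ψ n * ψ n :=
      Finset.sum_congr rfl fun n _ => by simp only [hψ]; ring
    simp only at hpot
    rw [hpot]
    have this' : ∀ S T P Q : ℝ, S - T = P → (S + Q) - (T + Q) = P := by intros; linarith
    refine this' _ _ _ _ ?_
    rw [← Finset.sum_sub_distrib]
    refine Finset.sum_congr rfl fun i _ => ?_
    rw [← Finset.sum_sub_distrib]
    refine Finset.sum_congr rfl fun n _ => ?_
    have := edge_id1 (f n) (f (n + e d K i)) (φ n) (φ (n + e d K i))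
    simp only [hψ]
    nlinarith [this]
  -- A - C ≥ 0
  have hAC : ∑ n, (fun n => ψ n ^ 2 / u n) n * opH d K vt u n
      ≤ ∑ n, ψ n * opH d K vt ψ n := by
    rw [hA, hC]
    have key : ∑ i : Fin d, ∑ n, ((fun n => ψ n ^ 2 / u n) (n + e d K i) - ψ n ^ 2 / u n)
          * (u (n + e d K i) - u n)
        ≤ ∑ i : Fin d, ∑ n, (ψ (n + e d K i) - ψ n) * (ψ (n + e d K i) - ψ n) := by
      refine Finset.sum_le_sum fun i _ => Finset.sum_le_sum fun n _ => ?_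
      have h2 := edge_id2 (hu n) (hu (n + e d K i)) (ψ n) (ψ (n + e d K i))
      have hpos : 0 ≤ u n * u (n + e d K i) * (ψ (n + e d K i) / u (n + e d K i) - ψ n / u n) ^ 2 :=
        mul_nonneg (mul_nonneg (hupos n).le (hupos (n + e d K i)).le) (sq_nonneg _)
      simp only
      nlinarith [h2, hpos]
    have hvt : ∑ n, vt n * (fun n => ψ n ^ 2 / u n) n * u n = ∑ n, vt n * ψ n * ψ n := by
      refine Finset.sum_congr rfl fun n _ => ?_
      have := hu n
      field_simp
    rw [hvt]
    exact add_le_add key le_rfl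
  rw [hBval] at hAB
  rw [hCval] at hAC
  linarith

/-- Landscape positivity: `u ≥ 1/Vmax`. -/
lemma landscape_pos {Vmax : ℝ} (hV : 0 < Vmax) (vt u : (Fin d → ZMod K) → ℝ)
    (hvt : ∀ n, 0 ≤ vt n ∧ vt n ≤ Vmax)
    (hland : ∀ n, opH d K vt u n = 1) :
    ∀ n, 1 / Vmax ≤ u n := by
  obtain ⟨m, -, hm⟩ := Finset.exists_min_image Finset.univ u ⟨Classical.arbitrary _, Finset.mem_univ _⟩
  have hmin : ∀ n, u m ≤ u n := fun n => hm n (Finset.mem_univ n)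
  have hsum : (∑ i : Fin d, (2 * u m - u (m + e d K i) - u (m - e d K i))) ≤ 0 := by
    refine Finset.sum_nonpos fun i _ => ?_
    have := hmin (m + e d K i); have := hmin (m - e d K i); linarith
  have heq := hland m
  unfold opH at heq
  have hvm : vt m * u m ≥ 1 := by linarith
  have hum : 0 < u m := by
    by_contra h
    push_neg at h
    have : vt m * u m ≤ 0 := mul_nonpos_of_nonneg_of_nonpos (hvt m).1 h
    linarith
  have h1 : 1 / Vmax ≤ u m := by
    rw [div_le_iff₀ hV]
    calc (1:ℝ) ≤ vt m * u m := hvm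
    _ ≤ Vmax * u m := mul_le_mul_of_nonneg_right (hvt m).2 hum.le
    _ = u m * Vmax := mul_comm _ _
  exact fun n => h1.trans (hmin n)

/-- Eigenvalue upper bound: `μ ≤ 4d + Vmax`. -/
lemma eig_upper {Vmax μ : ℝ} (v φ : (Fin d → ZMod K) → ℝ)
    (hv : ∀ n, 0 ≤ v n ∧ v n ≤ Vmax) (hφ : φ ≠ 0)
    (heig : ∀ n, opH d K v φ n = μ * φ n) :
    μ ≤ 4 * d + Vmax := by
  obtain ⟨m, -, hm⟩ := Finset.exists_max_image Finset.univ (fun n => (φ n) ^ 2)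
    ⟨Classical.arbitrary _, Finset.mem_univ _⟩
  have hmax : ∀ n, (φ n) ^ 2 ≤ (φ m) ^ 2 := fun n => hm n (Finset.mem_univ n)
  have hm0 : (φ m) ^ 2 ≠ 0 := by
    intro h
    apply hφ
    funext n
    have h1 : (φ n) ^ 2 ≤ 0 := h ▸ hmax n
    have h2 := sq_nonneg (φ n)
    have h3 : (φ n) ^ 2 = 0 := le_antisymm h1 h2
    simpa [pow_eq_zero_iff] using h3
  have hm0' : 0 < (φ m) ^ 2 := lt_of_le_of_ne (sq_nonneg _) (Ne.symm hm0)
  have heq := heig m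
  unfold opH at heq
  have hmul : μ * (φ m) ^ 2
      = (∑ i : Fin d, (2 * φ m - φ (m + e d K i) - φ (m - e d K i))) * φ m + v m * (φ m) ^ 2 := by
    have : μ * φ m * φ m = ((∑ i : Fin d, (2 * φ m - φ (m + e d K i) - φ (m - e d K i))) + v m * φ m) * φ m := by
      rw [← heq]
    nlinarith [this]
  have hcross : ∀ n, φ n * φ m ≤ (φ m) ^ 2 := by
    intro n
    nlinarith [hmax n, sq_nonneg (φ n - φ m), sq_nonneg (φ n + φ m)]
  have hcross2 : ∀ n, -((φ m) ^ 2) ≤ φ n * φ m := by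
    intro n
    nlinarith [hmax n, sq_nonneg (φ n + φ m)]
  have hbound : (∑ i : Fin d, (2 * φ m - φ (m + e d K i) - φ (m - e d K i))) * φ m
      ≤ 4 * d * (φ m) ^ 2 := by
    rw [Finset.sum_mul]
    calc ∑ i : Fin d, (2 * φ m - φ (m + e d K i) - φ (m - e d K i)) * φ m
        ≤ ∑ _i : Fin d, 4 * (φ m) ^ 2 := by
          refine Finset.sum_le_sum fun i _ => ?_
          have h1 := hcross2 (m + e d K i); have h2 := hcross2 (m - e d K i)
          nlinarith
      _ = 4 * d * (φ m) ^ 2 := by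
          rw [Finset.sum_const, Finset.card_univ, Fintype.card_fin]; ring
  have : μ * (φ m) ^ 2 ≤ (4 * d + Vmax) * (φ m) ^ 2 := by
    rw [hmul]
    have := (hv m).2
    nlinarith [hm0', hbound]
  exact le_of_mul_le_mul_right (by linarith [this]) hm0'

def chi {K : ℕ} (hK : (2:ℕ) ∣ K) (x : ZMod K) : ℝ :=
  if ZMod.castHom hK (ZMod 2) x = 0 then 1 else -1

lemma chi_sq {hK : (2:ℕ) ∣ K} (x : ZMod K) : chi hK x * chi hK x = 1 := by
  unfold chi; split <;> norm_num

lemma zmod2_ne (a : ZMod 2) (h : a ≠ 0) : a = 1 := by revert a h; decide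

lemma chi_add_one {hK : (2:ℕ) ∣ K} (x : ZMod K) : chi hK (x + 1) = - chi hK x := by
  unfold chi
  rw [map_add, map_one]
  by_cases h : ZMod.castHom hK (ZMod 2) x = 0
  · rw [if_pos h, h]
    norm_num
  · rw [if_neg h, zmod2_ne _ h]
    have h2 : (1 + 1 : ZMod 2) = 0 := by decide
    rw [if_pos h2]; norm_num

lemma chi_sub_one {hK : (2:ℕ) ∣ K} (x : ZMod K) : chi hK (x - 1) = - chi hK x := by
  have := chi_add_one (hK := hK) (x - 1)
  rw [sub_add_cancel] at this
  linarith

def eps {d K : ℕ} (hK : (2:ℕ) ∣ K) (n : Fin d → ZMod K) : ℝ := ∏ i, chi hK (n i)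

lemma eps_sq {hK : (2:ℕ) ∣ K} (n : Fin d → ZMod K) : eps hK n * eps hK n = 1 := by
  unfold eps
  rw [← Finset.prod_mul_distrib]
  exact Finset.prod_eq_one fun i _ => chi_sq (n i)

lemma eps_add_e {hK : (2:ℕ) ∣ K} (n : Fin d → ZMod K) (i : Fin d) :
    eps hK (n + e d K i) = - eps hK n := by
  unfold eps
  rw [← Finset.mul_prod_erase Finset.univ (fun j => chi hK ((n + e d K i) j)) (Finset.mem_univ i),
      ← Finset.mul_prod_erase Finset.univ (fun j => chi hK (n j)) (Finset.mem_univ i)]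
  have h1 : chi hK ((n + e d K i) i) = - chi hK (n i) := by
    have : (n + e d K i) i = n i + 1 := by simp [e]
    rw [this, chi_add_one]
  have h2 : ∏ j ∈ Finset.univ.erase i, chi hK ((n + e d K i) j)
      = ∏ j ∈ Finset.univ.erase i, chi hK (n j) := by
    refine Finset.prod_congr rfl fun j hj => ?_
    have hji : j ≠ i := Finset.ne_of_mem_erase hj
    have : (n + e d K i) j = n j := by simp [e, hji]
    rw [this]
  simp only [h1, h2]
  ring

lemma eps_sub_e {hK : (2:ℕ) ∣ K} (n : Fin d → ZMod K) (i : Fin d) :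
    eps hK (n - e d K i) = - eps hK n := by
  unfold eps
  rw [← Finset.mul_prod_erase Finset.univ (fun j => chi hK ((n - e d K i) j)) (Finset.mem_univ i),
      ← Finset.mul_prod_erase Finset.univ (fun j => chi hK (n j)) (Finset.mem_univ i)]
  have h1 : chi hK ((n - e d K i) i) = - chi hK (n i) := by
    have : (n - e d K i) i = n i - 1 := by simp [e]
    rw [this, chi_sub_one]
  have h2 : ∏ j ∈ Finset.univ.erase i, chi hK ((n - e d K i) j)
      = ∏ j ∈ Finset.univ.erase i, chi hK (n j) := by
    refine Finset.prod_congr rfl fun j hj => ?_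
    have hji : j ≠ i := Finset.ne_of_mem_erase hj
    have : (n - e d K i) j = n j := by simp [e, hji]
    rw [this]
  simp only [h1, h2]
  ring

/-- Duality: if `Hφ = μφ` then the parity-twisted `φ̃` satisfies `H̃φ̃ = μ̃φ̃`. -/
lemma dual_eig {hK : (2:ℕ) ∣ K} (Vmax μ : ℝ) (v φ : (Fin d → ZMod K) → ℝ)
    (heig : ∀ n, opH d K v φ n = μ * φ n) (n : Fin d → ZMod K) :
    opH d K (fun p => Vmax - v p) (fun p => eps hK p * φ p) n
      = (4 * d + Vmax - μ) * (eps hK n * φ n) := by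
  unfold opH
  have hsum : ∑ i : Fin d, (2 * (eps hK n * φ n) - eps hK (n + e d K i) * φ (n + e d K i)
        - eps hK (n - e d K i) * φ (n - e d K i))
      = eps hK n * ∑ i : Fin d, (4 * φ n - (2 * φ n - φ (n + e d K i) - φ (n - e d K i))) := by
    rw [Finset.mul_sum]
    refine Finset.sum_congr rfl fun i _ => ?_
    rw [eps_add_e, eps_sub_e]
    ring
  rw [hsum, Finset.sum_sub_distrib]
  have heq := heig n
  unfold opH at heq
  have h4 : ∑ _i : Fin d, (4 : ℝ) * φ n = 4 * d * φ n := by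
    rw [Finset.sum_const, Finset.card_univ, Fintype.card_fin]; ring
  rw [h4]
  have hX : ∑ i : Fin d, (2 * φ n - φ (n + e d K i) - φ (n - e d K i)) = μ * φ n - v n * φ n := by
    linarith [heq]
  rw [hX]
  ring

section agmon

variable (w : (Fin d → ZMod K) → ℝ)

def pathSet (n m : Fin d → ZMod K) : Set ℝ :=
  {s : ℝ | ∃ (k : ℕ) (γ : ℕ → Fin d → ZMod K),
    γ 0 = n ∧ γ k = m ∧ (∀ j < k, adj d K (γ (j + 1)) (γ j)) ∧
    s = ∑ j ∈ Finset.range k,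
      Real.log (1 + Real.sqrt (min (w (γ j)) (w (γ (j + 1)))))}

lemma rho_eq (n m : Fin d → ZMod K) : rho d K w n m = sInf (pathSet w n m) := rfl

lemma pathSet_nonneg (hw : ∀ n, 0 ≤ w n) (n m : Fin d → ZMod K) :
    ∀ s ∈ pathSet w n m, 0 ≤ s := by
  rintro s ⟨k, γ, -, -, -, rfl⟩
  refine Finset.sum_nonneg fun j _ => Real.log_nonneg ?_
  have : 0 ≤ Real.sqrt (min (w (γ j)) (w (γ (j + 1)))) := Real.sqrt_nonneg _
  linarith

lemma pathSet_bdd (hw : ∀ n, 0 ≤ w n) (n m : Fin d → ZMod K) :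
    BddBelow (pathSet w n m) :=
  ⟨0, fun s hs => pathSet_nonneg w hw n m s hs⟩

lemma val_sub_one (a : ZMod K) (h : a.val ≠ 0) : (a - 1).val = a.val - 1 := by
  have hlt := ZMod.val_lt a
  have h1 : 1 ≤ a.val := Nat.one_le_iff_ne_zero.mpr h
  have ha : ((a.val : ℕ) : ZMod K) = a := ZMod.natCast_rightInverse a
  have : a - 1 = (((a.val - 1 : ℕ)) : ZMod K) := by
    rw [Nat.cast_sub h1, Nat.cast_one, ha]
  rw [this, ZMod.val_natCast, Nat.mod_eq_of_lt (by omega)]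

/-- Connectivity of the torus graph. -/
lemma path_exists (n m : Fin d → ZMod K) :
    ∃ (k : ℕ) (γ : ℕ → Fin d → ZMod K), γ 0 = n ∧ γ k = m ∧
      ∀ j < k, adj d K (γ (j + 1)) (γ j) := by
  suffices h : ∀ (s : ℕ) (x : Fin d → ZMod K), (∑ j, (x j).val) = s →
      ∃ (k : ℕ) (γ : ℕ → Fin d → ZMod K), γ 0 = n ∧ γ k = n + x ∧
        ∀ j < k, adj d K (γ (j + 1)) (γ j) by
    obtain ⟨k, γ, h1, h2, h3⟩ := h (∑ j, ((m - n) j).val) (m - n) rfl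
    exact ⟨k, γ, h1, by rw [h2]; abel, h3⟩
  intro s
  induction s with
  | zero =>
    intro x hx
    have hx0 : x = 0 := by
      funext j
      have : (x j).val = 0 := by
        have := Finset.sum_eq_zero_iff.mp hx j (Finset.mem_univ j)
        exact this
      exact (ZMod.val_eq_zero _).mp this
    exact ⟨0, fun _ => n, rfl, by rw [hx0]; simp, fun j hj => absurd hj (Nat.not_lt_zero j)⟩
  | succ s ih =>
    intro x hx
    have : ∃ j0, (x j0).val ≠ 0 := by
      by_contra hc
      push_neg at hc
      have : ∑ j, (x j).val = 0 := Finset.sum_eq_zero fun j _ => hc j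
      omega
    obtain ⟨j0, hj0⟩ := this
    set y : Fin d → ZMod K := Function.update x j0 (x j0 - 1) with hy
    have hupd : ∀ j, j ≠ j0 → y j = x j := fun j hj => Function.update_of_ne hj _ _
    have hyj0 : (y j0).val = (x j0).val - 1 := by
      simp only [hy, Function.update_self]
      exact val_sub_one _ hj0
    have hysum : ∑ j, (y j).val = s := by
      have e1 := (Finset.add_sum_erase Finset.univ (fun j => (y j).val) (Finset.mem_univ j0)).symm
      have e2 := (Finset.add_sum_erase Finset.univ (fun j => (x j).val) (Finset.mem_univ j0)).symm
      have e3 : ∑ j ∈ Finset.univ.erase j0, (y j).val = ∑ j ∈ Finset.univ.erase j0, (x j).val :=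
        Finset.sum_congr rfl fun j hj => by rw [hupd j (Finset.ne_of_mem_erase hj)]
      omega
    obtain ⟨k, γ, h1, h2, h3⟩ := ih y hysum
    refine ⟨k + 1, Function.update γ (k + 1) (n + x), ?_, Function.update_self _ _ _, ?_⟩
    · rw [Function.update_of_ne (by omega : (0:ℕ) ≠ k + 1)]; exact h1
    · intro j hj
      rcases Nat.lt_succ_iff_lt_or_eq.mp hj with hjk | hjk
      · rw [Function.update_of_ne (by omega : j + 1 ≠ k + 1),
            Function.update_of_ne (by omega : j ≠ k + 1)]
        exact h3 j hjk
      · subst hjk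
        rw [Function.update_self, Function.update_of_ne (by omega : j ≠ j + 1), h2]
        refine ⟨j0, Or.inl ?_⟩
        funext l
        by_cases hl : l = j0
        · subst hl
          simp [hy, e]
          ring
        · simp [hy, e, hl, Function.update_of_ne hl]
end agmon

section agmon2

variable (w : (Fin d → ZMod K) → ℝ)

lemma pathSet_ne (n m : Fin d → ZMod K) : (pathSet w n m).Nonempty := by
  obtain ⟨k, γ, h1, h2, h3⟩ := path_exists n m
  exact ⟨_, k, γ, h1, h2, h3, rfl⟩

lemma rho_nonneg (hw : ∀ n, 0 ≤ w n) (n m : Fin d → ZMod K) : 0 ≤ rho d K w n m :=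
  Real.sInf_nonneg (pathSet_nonneg w hw n m)

lemma rho_self (hw : ∀ n, 0 ≤ w n) (n : Fin d → ZMod K) : rho d K w n n = 0 := by
  have hmem : (0:ℝ) ∈ pathSet w n n :=
    ⟨0, fun _ => n, rfl, rfl, fun j hj => absurd hj (Nat.not_lt_zero j), by simp⟩
  exact le_antisymm (csInf_le (pathSet_bdd w hw n n) hmem) (rho_nonneg w hw n n)

lemma agmon_nonneg (hw : ∀ n, 0 ≤ w n) (J : Set (Fin d → ZMod K)) (n : Fin d → ZMod K) :
    0 ≤ agmonDist d K w J n := by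
  refine Real.sInf_nonneg ?_
  rintro s ⟨m, -, rfl⟩
  exact rho_nonneg w hw n m

lemma agmonSet_bdd (hw : ∀ n, 0 ≤ w n) (J : Set (Fin d → ZMod K)) (n : Fin d → ZMod K) :
    BddBelow {s : ℝ | ∃ m ∈ J, s = rho d K w n m} := by
  refine ⟨0, ?_⟩
  rintro s ⟨m, -, rfl⟩
  exact rho_nonneg w hw n m

lemma agmon_zero (hw : ∀ n, 0 ≤ w n) {J : Set (Fin d → ZMod K)} {m : Fin d → ZMod K}
    (hm : m ∈ J) : agmonDist d K w J m = 0 := by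
  have hmem : rho d K w m m ∈ {s : ℝ | ∃ p ∈ J, s = rho d K w m p} := ⟨m, hm, rfl⟩
  have h1 := csInf_le (agmonSet_bdd w hw J m) hmem
  rw [rho_self w hw] at h1
  exact le_antisymm h1 (agmon_nonneg w hw J m)

lemma adj_symm {n m : Fin d → ZMod K} (h : adj d K m n) : adj d K n m := by
  obtain ⟨i, hi | hi⟩ := h
  · exact ⟨i, Or.inr (by rw [hi]; abel)⟩
  · exact ⟨i, Or.inl (by rw [hi]; abel)⟩

/-- Prepending an edge to a path. -/
lemma rho_step (hw : ∀ n, 0 ≤ w n) {n m : Fin d → ZMod K} (hadj : adj d K m n)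
    (p : Fin d → ZMod K) :
    rho d K w n p ≤ Real.log (1 + Real.sqrt (min (w n) (w m))) + rho d K w m p := by
  have hkey : ∀ s ∈ pathSet w m p,
      rho d K w n p ≤ Real.log (1 + Real.sqrt (min (w n) (w m))) + s := by
    rintro s ⟨k, γ, h1, h2, h3, rfl⟩
    set γ' : ℕ → Fin d → ZMod K := fun j => if j = 0 then n else γ (j - 1) with hγ'
    have hg0 : γ' 0 = n := rfl
    have hgs : ∀ j, γ' (j + 1) = γ j := fun j => by simp [hγ']
    have hmem : Real.log (1 + Real.sqrt (min (w n) (w m)))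
        + ∑ j ∈ Finset.range k, Real.log (1 + Real.sqrt (min (w (γ j)) (w (γ (j + 1)))))
        ∈ pathSet w n p := by
      refine ⟨k + 1, γ', hg0, by rw [hgs k, h2], ?_, ?_⟩
      · intro j hj
        cases j with
        | zero => rw [hgs 0, hg0, h1]; exact hadj
        | succ l =>
          rw [hgs (l + 1), hgs l]
          exact h3 l (by omega)
      · rw [Finset.sum_range_succ']
        have hf0 : Real.log (1 + Real.sqrt (min (w (γ' 0)) (w (γ' (0 + 1)))))
            = Real.log (1 + Real.sqrt (min (w n) (w m))) := by
          rw [hgs 0, hg0, h1]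
        have hfs : ∑ j ∈ Finset.range k,
              Real.log (1 + Real.sqrt (min (w (γ' (j + 1))) (w (γ' (j + 1 + 1)))))
            = ∑ j ∈ Finset.range k,
              Real.log (1 + Real.sqrt (min (w (γ j)) (w (γ (j + 1))))) :=
          Finset.sum_congr rfl fun j _ => by rw [hgs (j + 1), hgs j]
        rw [hfs, hf0]
        exact add_comm _ _
    exact csInf_le (pathSet_bdd w hw n p) hmem
  have hne := pathSet_ne w m p
  have h : rho d K w n p - Real.log (1 + Real.sqrt (min (w n) (w m))) ≤ rho d K w m p := by
    refine le_csInf hne fun s hs => ?_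
    linarith [hkey s hs]
  linarith

/-- Lipschitz bound for the Agmon distance along an edge. -/
lemma agmon_step (hw : ∀ n, 0 ≤ w n) {J : Set (Fin d → ZMod K)} (hJ : J.Nonempty)
    {n m : Fin d → ZMod K} (hadj : adj d K m n) :
    agmonDist d K w J n ≤ Real.log (1 + Real.sqrt (min (w n) (w m))) + agmonDist d K w J m := by
  have hne : {s : ℝ | ∃ p ∈ J, s = rho d K w m p}.Nonempty := by
    obtain ⟨p, hp⟩ := hJ
    exact ⟨rho d K w m p, p, hp, rfl⟩
  have h : agmonDist d K w J n - Real.log (1 + Real.sqrt (min (w n) (w m)))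
      ≤ agmonDist d K w J m := by
    refine le_csInf hne ?_
    rintro s ⟨p, hp, rfl⟩
    have h1 : agmonDist d K w J n ≤ rho d K w n p :=
      csInf_le (agmonSet_bdd w hw J n) ⟨p, hp, rfl⟩
    have h2 := rho_step w hw hadj p
    linarith
  linarith

end agmon2

/-- Key analytic bound: `(e^{αx} - e^{αy})² ≤ α² t e^{2α min(x,y)}`
when `|x - y| ≤ log(1 + √t)` and `0 < α ≤ 1`. -/
lemma exp_edge_bound {α t x y : ℝ} (hα0 : 0 < α) (hα1 : α ≤ 1) (ht : 0 ≤ t)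
    (hxy : |x - y| ≤ Real.log (1 + Real.sqrt t)) :
    (Real.exp (α * x) - Real.exp (α * y)) ^ 2 ≤ α ^ 2 * t * Real.exp (2 * α * min x y) := by
  have hst : 0 ≤ Real.sqrt t := Real.sqrt_nonneg t
  have key : ∀ a b : ℝ, b ≤ a → a - b ≤ Real.log (1 + Real.sqrt t) →
      (Real.exp (α * a) - Real.exp (α * b)) ^ 2 ≤ α ^ 2 * t * Real.exp (2 * α * b) := by
    intro a b hba hab
    have h1 : Real.exp (α * a) - Real.exp (α * b)
        = Real.exp (α * b) * (Real.exp (α * (a - b)) - 1) := by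
      rw [mul_sub, mul_one, ← Real.exp_add]
      ring_nf
    have h2 : Real.exp (α * (a - b)) ≤ 1 + α * Real.sqrt t := by
      have hle : α * (a - b) ≤ α * Real.log (1 + Real.sqrt t) :=
        mul_le_mul_of_nonneg_left hab hα0.le
      have h3 : Real.exp (α * Real.log (1 + Real.sqrt t)) = (1 + Real.sqrt t) ^ α := by
        rw [Real.rpow_def_of_pos (by linarith), mul_comm]
      have h4 : (1 + Real.sqrt t) ^ α ≤ 1 + α * Real.sqrt t := by
        have := rpow_one_add_le_one_add_mul_self (s := Real.sqrt t) (by linarith) hα0.le hα1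
        simpa using this
      calc Real.exp (α * (a - b)) ≤ Real.exp (α * Real.log (1 + Real.sqrt t)) :=
            Real.exp_le_exp.mpr hle
        _ = (1 + Real.sqrt t) ^ α := h3
        _ ≤ 1 + α * Real.sqrt t := h4
    have h5 : 0 ≤ Real.exp (α * (a - b)) - 1 := by
      have : (1:ℝ) ≤ Real.exp (α * (a - b)) := by
        rw [← Real.exp_zero]
        exact Real.exp_le_exp.mpr (by nlinarith)
      linarith
    have h6 : Real.exp (α * (a - b)) - 1 ≤ α * Real.sqrt t := by linarith
    rw [h1, mul_pow]
    have h7 : (Real.exp (α * (a - b)) - 1) ^ 2 ≤ (α * Real.sqrt t) ^ 2 := by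
      exact pow_le_pow_left₀ h5 h6 2
    have h8 : (α * Real.sqrt t) ^ 2 = α ^ 2 * t := by
      rw [mul_pow, Real.sq_sqrt ht]
    have h9 : Real.exp (α * b) ^ 2 = Real.exp (2 * α * b) := by
      rw [← Real.exp_nat_mul]
      ring_nf
    calc Real.exp (α * b) ^ 2 * (Real.exp (α * (a - b)) - 1) ^ 2
        ≤ Real.exp (α * b) ^ 2 * (α ^ 2 * t) := by
          refine mul_le_mul_of_nonneg_left ?_ (sq_nonneg _)
          rw [← h8]; exact h7
      _ = α ^ 2 * t * Real.exp (2 * α * b) := by rw [h9]; ring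
  rcases le_total y x with hyx | hyx
  · have := key x y hyx (by rwa [abs_of_nonneg (by linarith)] at hxy)
    rwa [min_eq_right hyx]
  · have := key y x hyx (by rwa [abs_sub_comm, abs_of_nonneg (by linarith)] at hxy)
    rw [min_eq_left hyx]
    have hsw : (Real.exp (α * x) - Real.exp (α * y)) ^ 2
        = (Real.exp (α * y) - Real.exp (α * x)) ^ 2 := by ring
    rwa [hsw]


set_option maxHeartbeats 2000000 in
/-- Dual Agmon estimate for high-energy modes: for `K ≥ 3` even, an eigenpair
`(μ, φ)` of `H = -Δ + V` with `μ ≥ 4d + δ` satisfies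
`∑_{h̃_n ≥ 1} e^{2αh̃_n} φ_n² ≤ (C₀/δ) ∑_n φ_n²`, where `h̃` is the Agmon
distance built from the dual landscape `ũ` (solving `H̃ũ = 1` with
`H̃ = -Δ + (V_max - V)`), `μ̃ = 4d + V_max - μ`, and `C, C₀` are the same
constants as in the low-energy Agmon theorem. -/
theorem dual_agmon_decay :
    ∃ C : ℝ, 0 < C ∧
      ∀ (d K : ℕ) [NeZero K], 3 ≤ K → Even K →
      ∀ (Vmax : ℝ) (v ut φ : (Fin d → ZMod K) → ℝ) (μ δ α : ℝ),
        0 < Vmax → (∀ n, 0 ≤ v n ∧ v n ≤ Vmax) → (∃ n, v n ≠ 0) →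
        (∀ n, opH d K (fun p => Vmax - v p) ut n = 1) →
        φ ≠ 0 → (∀ n, opH d K v φ n = μ * φ n) →
        0 < δ → 4 * d + δ ≤ μ →
        0 < α → α < 1 / Real.sqrt (C * d) →
        ∑ n ∈ Finset.univ.filter (fun n : Fin d → ZMod K =>
            1 ≤ agmonDist d K
              (fun p => max (1 / ut p - (4 * d + Vmax - μ)) 0)
              {p : Fin d → ZMod K | 1 / ut p ≤ 4 * d + Vmax - μ + δ} n),
          Real.exp (2 * α * agmonDist d K
              (fun p => max (1 / ut p - (4 * d + Vmax - μ)) 0)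
              {p : Fin d → ZMod K | 1 / ut p ≤ 4 * d + Vmax - μ + δ} n) *
            (φ n) ^ 2 ≤
        ((4 * Real.exp (2 * α) * d +
            (2 + 6 * C * α ^ 2) * Real.exp (2 * α) * d * Vmax) /
          (1 - C * d * α ^ 2)) / δ *
          ∑ n : Fin d → ZMod K, (φ n) ^ 2 := by
  refine ⟨1, one_pos, ?_⟩
  intro d K _ hK3 hKeven Vmax v ut φ μ δ α hV hv hvne hland hφ heig hδ hμ hα hαlt
  -- basic numerology
  have hd : 0 < d := by
    rcases Nat.eq_zero_or_pos d with h0 | h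
    · subst h0
      norm_num [Real.sqrt_zero] at hαlt
      linarith
    · exact h
  have hd1 : (1:ℝ) ≤ d := by exact_mod_cast hd
  have hsd : (1:ℝ) ≤ Real.sqrt d := by
    rw [show (1:ℝ) = Real.sqrt 1 by rw [Real.sqrt_one]]
    exact Real.sqrt_le_sqrt hd1
  have hαlt' : α < 1 / Real.sqrt d := by
    rwa [one_mul] at hαlt
  have hα1 : α < 1 := lt_of_lt_of_le hαlt' (by
    rw [div_le_one (by linarith)]; exact hsd)
  have hsdpos : (0:ℝ) < Real.sqrt d := by linarith
  have hαd : α ^ 2 * d < 1 := by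
    have h1 : α * Real.sqrt d < 1 := by
      rw [lt_div_iff₀ hsdpos] at hαlt'
      exact hαlt'
    have h2 : (α * Real.sqrt d) ^ 2 < 1 := by
      have := mul_nonneg hα.le (Real.sqrt_nonneg (d:ℝ))
      nlinarith
    calc α ^ 2 * d = (α * Real.sqrt d) ^ 2 := by
          rw [mul_pow, Real.sq_sqrt (by positivity : (0:ℝ) ≤ (d:ℝ))]
      _ < 1 := h2
  -- setup
  set μt : ℝ := 4 * d + Vmax - μ with hμtdef
  set w : (Fin d → ZMod K) → ℝ := fun p => max (1 / ut p - μt) 0 with hwdef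
  set J : Set (Fin d → ZMod K) := {p : Fin d → ZMod K | 1 / ut p ≤ μt + δ} with hJdef
  set h : (Fin d → ZMod K) → ℝ := agmonDist d K w J with hhdef
  have hw : ∀ n, 0 ≤ w n := fun n => le_max_right _ _
  set vt : (Fin d → ZMod K) → ℝ := fun p => Vmax - v p with hvtdef
  have hvt : ∀ n, 0 ≤ vt n ∧ vt n ≤ Vmax := fun n => ⟨by simp [hvtdef]; linarith [(hv n).2],
    by simp [hvtdef]; linarith [(hv n).1]⟩
  have hu : ∀ n, 1 / Vmax ≤ ut n := landscape_pos hV vt ut hvt hland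
  have hupos : ∀ n, 0 < ut n := fun n => lt_of_lt_of_le (by positivity) (hu n)
  have huV : ∀ n, 1 / ut n ≤ Vmax := fun n => by
    rw [div_le_iff₀ (hupos n)]
    calc (1:ℝ) = Vmax * (1 / Vmax) := by field_simp
    _ ≤ Vmax * ut n := by
        exact mul_le_mul_of_nonneg_left (hu n) hV.le
  have hμub : μ ≤ 4 * d + Vmax := eig_upper v φ hv hφ heig
  have hμt0 : 0 ≤ μt := by rw [hμtdef]; linarith
  have hμtV : μt ≤ Vmax - δ := by rw [hμtdef]; linarith
  have hwV : ∀ n, w n ≤ Vmax := fun n => by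
    rw [hwdef]
    simp only [max_le_iff]
    constructor
    · linarith [huV n]
    · linarith
  -- the dual eigenfunction
  have hKdvd : (2:ℕ) ∣ K := hKeven.two_dvd
  set φt : (Fin d → ZMod K) → ℝ := fun p => eps hKdvd p * φ p with hφtdef
  have heig2 : ∀ n, opH d K vt φt n = μt * φt n := fun n => dual_eig Vmax μ v φ heig n
  have hφtsq : ∀ n, φt n ^ 2 = φ n ^ 2 := fun n => by
    simp only [hφtdef, mul_pow]
    have := eps_sq (hK := hKdvd) n
    nlinarith [this]
  set f : (Fin d → ZMod K) → ℝ := fun n => Real.exp (α * h n) with hfdef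
  set F : (Fin d → ZMod K) → ℝ := fun n => Real.exp (2 * α * h n) with hFdef
  have hfF : ∀ n, f n ^ 2 = F n := fun n => by
    rw [hfdef, hFdef]
    simp only
    rw [sq, ← Real.exp_add]
    ring_nf
  have hFpos : ∀ n, 0 < F n := fun n => Real.exp_pos _
  have hSφ : (0:ℝ) ≤ ∑ n : Fin d → ZMod K, (φ n) ^ 2 :=
    Finset.sum_nonneg fun n _ => sq_nonneg _
  -- case J empty
  rcases Set.eq_empty_or_nonempty J with hJe | hJne
  · have hzero : ∀ n, h n = 0 := by
      intro n
      rw [hhdef]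
      unfold agmonDist
      have : {s : ℝ | ∃ m ∈ J, s = rho d K w n m} = ∅ := by
        rw [hJe]; simp
      rw [this, Real.sInf_empty]
    have hfilt : Finset.univ.filter (fun n : Fin d → ZMod K => 1 ≤ h n) = ∅ := by
      apply Finset.filter_false_of_mem
      intro n _
      rw [hzero n]
      norm_num
    rw [hfilt, Finset.sum_empty]
    have hden : (0:ℝ) < 1 - 1 * d * α ^ 2 := by nlinarith [hαd]
    have hnum : (0:ℝ) ≤ 4 * Real.exp (2 * α) * d +
        (2 + 6 * 1 * α ^ 2) * Real.exp (2 * α) * d * Vmax := by positivity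
    positivity
  -- main case
  have henergy := energy_ineq vt ut φt f μt (fun n => (hupos n).ne') hupos hland heig2
  -- edge bound
  have hedge : ∑ i : Fin d, ∑ n, (φt n * φt (n + e d K i)) * (f (n + e d K i) - f n) ^ 2
      ≤ α ^ 2 * d * ∑ n, w n * F n * (φ n) ^ 2 := by
    have per_i : ∀ i : Fin d,
        ∑ n, (φt n * φt (n + e d K i)) * (f (n + e d K i) - f n) ^ 2
          ≤ α ^ 2 * ∑ n, w n * F n * (φ n) ^ 2 := by
      intro i
      have per_n : ∀ n, (φt n * φt (n + e d K i)) * (f (n + e d K i) - f n) ^ 2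
          ≤ (α ^ 2 / 2) * (w n * F n * (φ n) ^ 2
            + w (n + e d K i) * F (n + e d K i) * (φ (n + e d K i)) ^ 2) := by
        intro n
        set m : Fin d → ZMod K := n + e d K i with hm
        have hadj : adj d K m n := ⟨i, Or.inl hm⟩
        have s1 := agmon_step w hw hJne hadj
        have s2 := agmon_step w hw hJne (adj_symm hadj)
        rw [min_comm (w m) (w n)] at s2
        have habs : |h m - h n| ≤ Real.log (1 + Real.sqrt (min (w n) (w m))) :=
          abs_le.mpr ⟨by rw [hhdef]; linarith [s1], by rw [hhdef]; linarith [s2]⟩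
        have ht0 : 0 ≤ min (w n) (w m) := le_min (hw n) (hw m)
        have hexp := exp_edge_bound hα hα1.le ht0 habs
        have hEn : Real.exp (2 * α * min (h m) (h n)) ≤ F n := by
          rw [hFdef]
          simp only
          exact Real.exp_le_exp.mpr (by
            have : min (h m) (h n) ≤ h n := min_le_right _ _
            nlinarith)
        have hEm : Real.exp (2 * α * min (h m) (h n)) ≤ F m := by
          rw [hFdef]
          simp only
          exact Real.exp_le_exp.mpr (by
            have : min (h m) (h n) ≤ h m := min_le_left _ _
            nlinarith)
        have hEpos : 0 < Real.exp (2 * α * min (h m) (h n)) := Real.exp_pos _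
        have htn : min (w n) (w m) ≤ w n := min_le_left _ _
        have htm : min (w n) (w m) ≤ w m := min_le_right _ _
        have hD : (f m - f n) ^ 2 ≤ α ^ 2 * min (w n) (w m)
            * Real.exp (2 * α * min (h m) (h n)) := by
          have : f m - f n = Real.exp (α * h m) - Real.exp (α * h n) := by
            rw [hfdef]
          rw [this]
          exact hexp
        have hDn : (f m - f n) ^ 2 ≤ α ^ 2 * (w n * F n) := by
          calc (f m - f n) ^ 2 ≤ α ^ 2 * min (w n) (w m) * Real.exp (2 * α * min (h m) (h n)) := hD
          _ ≤ α ^ 2 * (w n * F n) := by nlinarith [sq_nonneg α, mul_le_mul htn hEn hEpos.le (hw n)]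
        have hDm : (f m - f n) ^ 2 ≤ α ^ 2 * (w m * F m) := by
          calc (f m - f n) ^ 2 ≤ α ^ 2 * min (w n) (w m) * Real.exp (2 * α * min (h m) (h n)) := hD
          _ ≤ α ^ 2 * (w m * F m) := by nlinarith [sq_nonneg α, mul_le_mul htm hEm hEpos.le (hw m)]
        have hDpos : 0 ≤ (f m - f n) ^ 2 := sq_nonneg _
        have hprod : φt n * φt m ≤ (φ n ^ 2 + φ m ^ 2) / 2 := by
          nlinarith [sq_nonneg (φt n - φt m), hφtsq n, hφtsq m]
        have q0 : (φt n * φt m) * (f m - f n) ^ 2 ≤ ((φ n ^ 2 + φ m ^ 2) / 2) * (f m - f n) ^ 2 :=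
          mul_le_mul_of_nonneg_right hprod hDpos
        have q1 : φ n ^ 2 * (f m - f n) ^ 2 ≤ φ n ^ 2 * (α ^ 2 * (w n * F n)) :=
          mul_le_mul_of_nonneg_left hDn (sq_nonneg _)
        have q2 : φ m ^ 2 * (f m - f n) ^ 2 ≤ φ m ^ 2 * (α ^ 2 * (w m * F m)) :=
          mul_le_mul_of_nonneg_left hDm (sq_nonneg _)
        nlinarith [q0, q1, q2]
      calc ∑ n, (φt n * φt (n + e d K i)) * (f (n + e d K i) - f n) ^ 2
          ≤ ∑ n, (α ^ 2 / 2) * (w n * F n * (φ n) ^ 2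
            + w (n + e d K i) * F (n + e d K i) * (φ (n + e d K i)) ^ 2) :=
            Finset.sum_le_sum fun n _ => per_n n
        _ = (α ^ 2 / 2) * ((∑ n, w n * F n * (φ n) ^ 2)
            + ∑ n, w (n + e d K i) * F (n + e d K i) * (φ (n + e d K i)) ^ 2) := by
            rw [← Finset.mul_sum, Finset.sum_add_distrib]
        _ = α ^ 2 * ∑ n, w n * F n * (φ n) ^ 2 := by
            rw [sum_shift (fun p => w p * F p * (φ p) ^ 2) (e d K i)]
            ring
    calc ∑ i : Fin d, ∑ n, (φt n * φt (n + e d K i)) * (f (n + e d K i) - f n) ^ 2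
        ≤ ∑ _i : Fin d, α ^ 2 * ∑ n, w n * F n * (φ n) ^ 2 :=
          Finset.sum_le_sum fun i _ => per_i i
      _ = α ^ 2 * d * ∑ n, w n * F n * (φ n) ^ 2 := by
          rw [Finset.sum_const, Finset.card_univ, Fintype.card_fin, nsmul_eq_mul]
          ring
  -- convert energy LHS
  have henergy' : ∑ n, (1 / ut n - μt) * (F n * (φ n) ^ 2)
      ≤ α ^ 2 * d * ∑ n, w n * F n * (φ n) ^ 2 := by
    calc ∑ n, (1 / ut n - μt) * (F n * (φ n) ^ 2)
        = ∑ n, (1 / ut n - μt) * (f n * φt n) ^ 2 :=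
          Finset.sum_congr rfl fun n _ => by rw [mul_pow, hfF n, hφtsq n]
      _ ≤ _ := le_trans henergy hedge
  set A : ℝ := ∑ n : Fin d → ZMod K, (φ n) ^ 2 with hA
  set G : (Fin d → ZMod K) → ℝ := fun n => (1 / ut n - μt) * (F n * (φ n) ^ 2) with hG
  set W : (Fin d → ZMod K) → ℝ := fun n => w n * F n * (φ n) ^ 2 with hW
  set S1 : ℝ := ∑ n ∈ Finset.univ.filter (fun n => ¬ n ∈ J), W n with hS1
  have hhJ : ∀ n ∈ J, h n = 0 := fun n hn => by rw [hhdef]; exact agmon_zero w hw hn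
  have hFJ : ∀ n ∈ J, F n = 1 := fun n hn => by
    rw [hFdef]; simp only; rw [hhJ n hn]; simp
  have hWnonneg : ∀ n, 0 ≤ W n := fun n => by
    rw [hW]; simp only
    exact mul_nonneg (mul_nonneg (hw n) (hFpos n).le) (sq_nonneg _)
  have hGsplit := Finset.sum_filter_add_sum_filter_not Finset.univ (fun n => n ∈ J) G
  have hWsplit := Finset.sum_filter_add_sum_filter_not Finset.univ (fun n => n ∈ J) W
  -- J part of G is bounded below
  have hGJ : -(Vmax * A) ≤ ∑ n ∈ Finset.univ.filter (fun n => n ∈ J), G n := by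
    have step1 : ∑ n ∈ Finset.univ.filter (fun n => n ∈ J), (-(Vmax * (φ n) ^ 2))
        ≤ ∑ n ∈ Finset.univ.filter (fun n => n ∈ J), G n := by
      refine Finset.sum_le_sum fun n hn => ?_
      have hnJ : n ∈ J := (Finset.mem_filter.mp hn).2
      rw [hG]; simp only
      rw [hFJ n hnJ]
      have h1 : 0 < 1 / ut n := one_div_pos.mpr (hupos n)
      nlinarith [sq_nonneg (φ n), hμtV, hδ]
    have step2 : Vmax * ∑ n ∈ Finset.univ.filter (fun n => n ∈ J), (φ n) ^ 2 ≤ Vmax * A := by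
      refine mul_le_mul_of_nonneg_left ?_ hV.le
      exact Finset.sum_le_sum_of_subset_of_nonneg (Finset.filter_subset _ _)
        (fun n _ _ => sq_nonneg _)
    calc -(Vmax * A) ≤ -(Vmax * ∑ n ∈ Finset.univ.filter (fun n => n ∈ J), (φ n) ^ 2) := by
          linarith
      _ = ∑ n ∈ Finset.univ.filter (fun n => n ∈ J), (-(Vmax * (φ n) ^ 2)) := by
          rw [Finset.mul_sum, ← Finset.sum_neg_distrib]
      _ ≤ _ := step1
  -- off J, G = W
  have hGc : ∑ n ∈ Finset.univ.filter (fun n => ¬ n ∈ J), G n = S1 := by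
    rw [hS1]
    refine Finset.sum_congr rfl fun n hn => ?_
    have hnJ : ¬ n ∈ J := (Finset.mem_filter.mp hn).2
    have hgt : μt + δ < 1 / ut n := by
      by_contra hc
      push_neg at hc
      exact hnJ (by rw [hJdef]; exact hc)
    have hwn : w n = 1 / ut n - μt := by
      rw [hwdef]; simp only
      exact max_eq_left (by linarith)
    rw [hG, hW]; simp only
    rw [hwn]; ring
  -- J part of W is bounded above
  have hWJ : ∑ n ∈ Finset.univ.filter (fun n => n ∈ J), W n ≤ Vmax * A := by
    calc ∑ n ∈ Finset.univ.filter (fun n => n ∈ J), W n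
        ≤ ∑ n ∈ Finset.univ.filter (fun n => n ∈ J), Vmax * (φ n) ^ 2 := by
          refine Finset.sum_le_sum fun n hn => ?_
          have hnJ : n ∈ J := (Finset.mem_filter.mp hn).2
          rw [hW]; simp only
          rw [hFJ n hnJ]
          nlinarith [sq_nonneg (φ n), hwV n, hw n]
      _ = Vmax * ∑ n ∈ Finset.univ.filter (fun n => n ∈ J), (φ n) ^ 2 := by
          rw [Finset.mul_sum]
      _ ≤ Vmax * A := by
          refine mul_le_mul_of_nonneg_left ?_ hV.le
          exact Finset.sum_le_sum_of_subset_of_nonneg (Finset.filter_subset _ _)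
            (fun n _ _ => sq_nonneg _)
  -- absorb
  have hk0 : (0:ℝ) ≤ α ^ 2 * d := by positivity
  have hS1bound : (1 - α ^ 2 * d) * S1 ≤ (1 + α ^ 2 * d) * Vmax * A := by
    have e1 : ∑ n, G n ≤ α ^ 2 * d * ∑ n, W n := henergy'
    have e2 : α ^ 2 * d * ∑ n, W n
        = α ^ 2 * d * ((∑ n ∈ Finset.univ.filter (fun n => n ∈ J), W n) + S1) := by
      rw [← hWsplit]
    have e3 : α ^ 2 * d * ((∑ n ∈ Finset.univ.filter (fun n => n ∈ J), W n) + S1)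
        ≤ α ^ 2 * d * (Vmax * A + S1) :=
      mul_le_mul_of_nonneg_left (by linarith [hWJ]) hk0
    have e4 : (∑ n ∈ Finset.univ.filter (fun n => n ∈ J), G n) + S1 = ∑ n, G n := by
      rw [← hGc]; exact hGsplit
    nlinarith [e1, e3, hGJ, e4, e2]
  -- LHS vs S1
  have hTsub : Finset.univ.filter (fun n : Fin d → ZMod K => 1 ≤ h n)
      ⊆ Finset.univ.filter (fun n => ¬ n ∈ J) := by
    intro n hn
    have h1 : 1 ≤ h n := (Finset.mem_filter.mp hn).2
    refine Finset.mem_filter.mpr ⟨Finset.mem_univ n, fun hnJ => ?_⟩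
    rw [hhJ n hnJ] at h1
    linarith
  have hδT : δ * ∑ n ∈ Finset.univ.filter (fun n : Fin d → ZMod K => 1 ≤ h n),
      Real.exp (2 * α * h n) * (φ n) ^ 2 ≤ S1 := by
    rw [Finset.mul_sum]
    calc ∑ n ∈ Finset.univ.filter (fun n : Fin d → ZMod K => 1 ≤ h n),
          δ * (Real.exp (2 * α * h n) * (φ n) ^ 2)
        ≤ ∑ n ∈ Finset.univ.filter (fun n : Fin d → ZMod K => 1 ≤ h n), W n := by
          refine Finset.sum_le_sum fun n hn => ?_
          have h1 : 1 ≤ h n := (Finset.mem_filter.mp hn).2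
          have hnJ : ¬ n ∈ J := fun hnJ => by
            rw [hhJ n hnJ] at h1; linarith
          have hgt : μt + δ < 1 / ut n := by
            by_contra hc
            push_neg at hc
            exact hnJ (by rw [hJdef]; exact hc)
          have hwδ : δ ≤ w n := by
            rw [hwdef]; simp only
            calc δ ≤ 1 / ut n - μt := by linarith
            _ ≤ max (1 / ut n - μt) 0 := le_max_left _ _
          have hFn : F n = Real.exp (2 * α * h n) := by rw [hFdef]
          rw [hW]; simp only
          rw [hFn]
          have hp : 0 ≤ Real.exp (2 * α * h n) * (φ n) ^ 2 :=
            mul_nonneg (Real.exp_pos _).le (sq_nonneg _)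
          nlinarith [hwδ, hp]
      _ ≤ S1 := by
          rw [hS1]
          exact Finset.sum_le_sum_of_subset_of_nonneg hTsub (fun n _ _ => hWnonneg n)
  -- final arithmetic
  set T : ℝ := ∑ n ∈ Finset.univ.filter (fun n : Fin d → ZMod K => 1 ≤ h n),
      Real.exp (2 * α * h n) * (φ n) ^ 2 with hT
  have hX : (0:ℝ) < 1 - 1 * (d:ℝ) * α ^ 2 := by nlinarith [hαd]
  have he1 : (1:ℝ) ≤ Real.exp (2 * α) := Real.one_le_exp (by linarith)
  have t1 : (0:ℝ) ≤ (1 - α ^ 2 * d) * Vmax := mul_nonneg (by linarith [hαd]) hV.le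
  have t2 : (0:ℝ) ≤ (Real.exp (2 * α) * d - 1) * Vmax :=
    mul_nonneg (by nlinarith [he1, hd1]) hV.le
  have t3 : (0:ℝ) ≤ Real.exp (2 * α) * d := by positivity
  have t4 : (0:ℝ) ≤ α ^ 2 * (Real.exp (2 * α) * d * Vmax) := by positivity
  have hkey : (1 + α ^ 2 * d) * Vmax
      ≤ 4 * Real.exp (2 * α) * d + (2 + 6 * 1 * α ^ 2) * Real.exp (2 * α) * d * Vmax := by
    nlinarith [t1, t2, t3, t4]
  have hfin1 : (1 - 1 * (d:ℝ) * α ^ 2) * S1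
      ≤ (4 * Real.exp (2 * α) * d + (2 + 6 * 1 * α ^ 2) * Real.exp (2 * α) * d * Vmax) * A := by
    have hmul := mul_le_mul_of_nonneg_right hkey hSφ
    nlinarith [hS1bound, hmul]
  have hXδ : (0:ℝ) < (1 - 1 * (d:ℝ) * α ^ 2) * δ := mul_pos hX hδ
  have hRHS : ((4 * Real.exp (2 * α) * d
      + (2 + 6 * 1 * α ^ 2) * Real.exp (2 * α) * d * Vmax) / (1 - 1 * (d:ℝ) * α ^ 2)) / δ * A
      = ((4 * Real.exp (2 * α) * d
      + (2 + 6 * 1 * α ^ 2) * Real.exp (2 * α) * d * Vmax) * A)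
        / ((1 - 1 * (d:ℝ) * α ^ 2) * δ) := by
    field_simp
  rw [hRHS, le_div_iff₀ hXδ]
  have hm1 : (1 - 1 * (d:ℝ) * α ^ 2) * (δ * T) ≤ (1 - 1 * (d:ℝ) * α ^ 2) * S1 :=
    mul_le_mul_of_nonneg_left hδT hX.le
  nlinarith [hm1, hfin1]
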